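/- arXiv:math/0504360 — 6 statements merged into one kernel-verified Lean document; each statement's English description precedes it below -/
import Mathlib

section
/- Let G̃ ⊆ GL(2,ℂ) be a finite subgroup containing −I, acting on ℂ[x,y] by g·f = f ∘ g⁻¹, and let I ⊆ ℂ[x,y] be a G̃-cluster. Set J = σ⁻¹(I) ⊆ ℂ[a,b,c]. Then the ring homomorphism ℂ[a,b,c]/J → ℂ[x,y]/I induced by σ is injective, its image is the subring of ℂ[x,y]/I fixed by the automorphism induced by −I, and dim_ℂ (ℂ[a,b,c]/J) = |G̃|/2. Moreover, if I ⊆ ⟨x,y⟩ then J ⊆ ⟨a,b,c⟩. -/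
open MvPolynomial

/-- The action of `g ∈ GL(n,ℂ)` on polynomials by `g · f = f ∘ g⁻¹`: the variable `Xᵢ`
is substituted by the `i`-th coordinate of `g⁻¹ · X`. -/
noncomputable def actGL {n : ℕ} (g : GL (Fin n) ℂ) :
    MvPolynomial (Fin n) ℂ →ₐ[ℂ] MvPolynomial (Fin n) ℂ :=
  aeval fun i => ∑ j, ((g⁻¹ : GL (Fin n) ℂ) : Matrix (Fin n) (Fin n) ℂ) i j • X j

/-- The ℂ-algebra homomorphism `σ : ℂ[a,b,c] → ℂ[x,y]` with `σ(a)=x²`, `σ(b)=y²`,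
`σ(c)=xy`. -/
noncomputable def sigmaHom : MvPolynomial (Fin 3) ℂ →ₐ[ℂ] MvPolynomial (Fin 2) ℂ :=
  aeval ![X 0 ^ 2, X 1 ^ 2, X 0 * X 1]

noncomputable def negAev : MvPolynomial (Fin 2) ℂ →ₐ[ℂ] MvPolynomial (Fin 2) ℂ :=
  aeval fun i => - X i

lemma actGL_neg_one : actGL (-1 : GL (Fin 2) ℂ) = negAev := by
  unfold actGL negAev
  congr 1
  funext i
  simp [Matrix.one_apply, apply_ite, Finset.sum_ite_eq]

lemma negAev_invol (f : MvPolynomial (Fin 2) ℂ) : negAev (negAev f) = f := by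
  have h : negAev.comp negAev = AlgHom.id ℂ _ := by
    apply MvPolynomial.algHom_ext
    intro i
    simp [negAev]
  calc negAev (negAev f) = (negAev.comp negAev) f := rfl
    _ = f := by rw [h]; rfl

lemma negAev_sigma (p : MvPolynomial (Fin 3) ℂ) : negAev (sigmaHom p) = sigmaHom p := by
  have h : negAev.comp sigmaHom = sigmaHom := by
    apply MvPolynomial.algHom_ext
    intro i
    fin_cases i <;> simp [sigmaHom, negAev]
  calc negAev (sigmaHom p) = (negAev.comp sigmaHom) p := rfl
    _ = sigmaHom p := by rw [h]

lemma constantCoeff_sigma (p : MvPolynomial (Fin 3) ℂ) :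
    constantCoeff (sigmaHom p) = constantCoeff p := by
  have h : (constantCoeff : MvPolynomial (Fin 2) ℂ →+* ℂ).comp
      (sigmaHom : MvPolynomial (Fin 3) ℂ →+* MvPolynomial (Fin 2) ℂ) = constantCoeff := by
    apply MvPolynomial.ringHom_ext
    · intro c; simp [sigmaHom]
    · intro i; fin_cases i <;> simp [sigmaHom]
  exact RingHom.congr_fun h p

lemma coeff_negAev (f : MvPolynomial (Fin 2) ℂ) (d : Fin 2 →₀ ℕ) :
    coeff d (negAev f) = ((-1 : ℂ)^(d 0 + d 1)) * coeff d f := by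
  induction f using MvPolynomial.induction_on' with
  | monomial e c =>
    have h : negAev (monomial e c) = ((-1 : ℂ)^(e 0 + e 1)) • monomial e c := by
      rw [negAev, aeval_monomial]
      rw [Finsupp.prod_fintype _ _ (fun i => pow_zero _), Fin.prod_univ_two]
      rw [monomial_eq, Finsupp.prod_fintype _ _ (fun i => pow_zero _), Fin.prod_univ_two]
      rw [neg_pow, neg_pow]
      simp only [algebraMap_eq, smul_eq_C_mul, pow_add, map_mul, map_pow, map_neg, map_one]
      ring
    rw [h, coeff_smul, smul_eq_mul]
    by_cases h' : e = d
    · subst h'; rfl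
    · simp [coeff_monomial, h']
  | add p q hp hq =>
    rw [map_add, coeff_add, coeff_add, mul_add, hp, hq]

lemma monomial_eq_two (d : Fin 2 →₀ ℕ) (c : ℂ) :
    monomial d c = C c * X 0 ^ d 0 * X 1 ^ d 1 := by
  rw [monomial_eq, Finsupp.prod_fintype _ _ (fun i => pow_zero _), Fin.prod_univ_two, mul_assoc]

lemma even_monomial_mem (d : Fin 2 →₀ ℕ) (c : ℂ) (h : Even (d 0 + d 1)) :
    monomial d c ∈ sigmaHom.range := by
  rcases Nat.even_or_odd (d 0) with h0 | h0
  · have h1 : Even (d 1) := (Nat.even_add.mp h).mp h0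
    obtain ⟨k, hk⟩ := h0
    obtain ⟨l, hl⟩ := h1
    have heq : sigmaHom (C c * X 0 ^ k * X 1 ^ l) = monomial d c := by
      rw [monomial_eq_two]
      simp only [sigmaHom, map_mul, map_pow, aeval_X, aeval_C, algebraMap_eq,
        Matrix.cons_val_zero, Matrix.cons_val_one, Matrix.head_cons]
      rw [hk, hl]
      ring
    exact ⟨_, heq⟩
  · have h1 : Odd (d 1) := by
      rcases Nat.even_or_odd (d 1) with h1 | h1
      · exact absurd ((Nat.even_add.mp h).mpr h1) (Nat.not_even_iff_odd.mpr h0)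
      · exact h1
    obtain ⟨k, hk⟩ := h0
    obtain ⟨l, hl⟩ := h1
    have heq : sigmaHom (C c * X 0 ^ k * X 1 ^ l * X 2) = monomial d c := by
      rw [monomial_eq_two]
      simp only [sigmaHom, map_mul, map_pow, aeval_X, aeval_C, algebraMap_eq,
        Matrix.cons_val_zero, Matrix.cons_val_one, Matrix.head_cons]
      rw [hk, hl]
      ring_nf
      rw [show (2 : Fin 3) = ⟨2, by norm_num⟩ from rfl]
      simp [Matrix.cons_val_fin_one, Matrix.cons_val_succ]
      ring
    exact ⟨_, heq⟩

lemma fixed_mem_range (P : MvPolynomial (Fin 2) ℂ) (h : negAev P = P) :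
    ∃ p, sigmaHom p = P := by
  have key : ∀ d ∈ P.support, Even ((d : Fin 2 →₀ ℕ) 0 + d 1) := by
    intro d hd
    by_contra hodd
    have hodd' : Odd (d 0 + d 1) := Nat.not_even_iff_odd.mp hodd
    have hc := coeff_negAev P d
    rw [h, hodd'.neg_one_pow, neg_one_mul] at hc
    have h0 : (2:ℂ) * coeff d P = 0 := by linear_combination hc
    have hz : coeff d P = 0 := by
      rcases mul_eq_zero.mp h0 with h' | h'
      · norm_num at h'
      · exact h'
    exact mem_support_iff.mp hd hz
  have hmem : (∑ d ∈ P.support, monomial d (coeff d P)) ∈ sigmaHom.range :=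
    Subalgebra.sum_mem _ (fun d hd => even_monomial_mem d (coeff d P) (key d hd))
  rw [P.support_sum_monomial_coeff] at hmem
  exact hmem

lemma fixrank {G : Type*} [Group G] [Fintype G] (g₀ : G) (hg : g₀ ≠ 1)
    (hg2 : g₀ * g₀ = 1) :
    2 * Module.finrank ℂ (LinearMap.ker
      ((LinearMap.mulLeft ℂ (MonoidAlgebra.single g₀ (1:ℂ))) - LinearMap.id)) =
      Fintype.card G := by
  classical
  set A := MonoidAlgebra ℂ G
  set L : A →ₗ[ℂ] A := LinearMap.mulLeft ℂ (MonoidAlgebra.single g₀ (1:ℂ)) with hL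
  let b : Module.Basis G ℂ A := MonoidAlgebra.basis G ℂ
  haveI : Module.Finite ℂ A := Module.Finite.of_basis b
  have hsq : (MonoidAlgebra.single g₀ (1:ℂ)) * (MonoidAlgebra.single g₀ (1:ℂ)) = 1 := by
    rw [MonoidAlgebra.single_mul_single, hg2, mul_one, ← MonoidAlgebra.one_def]
  have hLL : ∀ x, L (L x) = x := by
    intro x
    simp only [hL, LinearMap.mulLeft_apply, ← mul_assoc, hsq, one_mul]
  set F : Submodule ℂ A := LinearMap.ker (L - LinearMap.id) with hF
  have memF : ∀ x, x ∈ F ↔ L x = x := by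
    intro x
    rw [hF, LinearMap.mem_ker, LinearMap.sub_apply, LinearMap.id_apply, sub_eq_zero]
  set P : A →ₗ[ℂ] A := (2⁻¹ : ℂ) • (LinearMap.id + L) with hP
  have hproj : LinearMap.IsProj F P := by
    constructor
    · intro x
      rw [memF]
      simp only [hP, LinearMap.smul_apply, LinearMap.add_apply, LinearMap.id_apply,
        map_smul, map_add, hLL]
      rw [add_comm]
    · intro x hx
      rw [memF] at hx
      simp only [hP, LinearMap.smul_apply, LinearMap.add_apply, LinearMap.id_apply, hx]
      rw [← two_smul ℂ x, smul_smul]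
      norm_num
  have htrP : LinearMap.trace ℂ A P = (Module.finrank ℂ F : ℂ) := hproj.trace
  have htrL : LinearMap.trace ℂ A L = 0 := by
    rw [LinearMap.trace_eq_matrix_trace ℂ b]
    rw [Matrix.trace]
    apply Finset.sum_eq_zero
    intro i _
    rw [Matrix.diag_apply, LinearMap.toMatrix_apply]
    have hb : b i = MonoidAlgebra.single i (1:ℂ) := rfl
    have h1 : L (b i) = MonoidAlgebra.single (g₀ * i) (1:ℂ) := by
      rw [hb, hL]
      simp only [LinearMap.mulLeft_apply]
      rw [MonoidAlgebra.single_mul_single, mul_one]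
    rw [h1]
    have h2 : g₀ * i ≠ i := fun h => hg (mul_right_cancel (by rw [one_mul]; exact h))
    have h3 : b.repr (MonoidAlgebra.single (g₀ * i) (1:ℂ)) = Finsupp.single (g₀ * i) (1:ℂ) := by
      simp [b, Finsupp.basisSingleOne_repr]
      rfl
    rw [h3, Finsupp.single_apply, if_neg h2]
  have htrP2 : LinearMap.trace ℂ A P = (2⁻¹ : ℂ) * (Fintype.card G : ℂ) := by
    rw [hP, map_smul, map_add, htrL, add_zero, LinearMap.trace_id, smul_eq_mul,
      Module.finrank_eq_card_basis b]
  have heq : (Module.finrank ℂ F : ℂ) = (2⁻¹ : ℂ) * (Fintype.card G : ℂ) := by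
    rw [← htrP, htrP2]
  have h2 : ((2 * Module.finrank ℂ F : ℕ) : ℂ) = ((Fintype.card G : ℕ) : ℂ) := by
    push_cast
    rw [heq]
    ring
  exact_mod_cast h2

/-- Let `G̃ ⊆ GL(2,ℂ)` be a finite subgroup containing `-I` and `I` a `G̃`-cluster.
With `J = σ⁻¹(I)`, the induced map `ℂ[a,b,c]/J → ℂ[x,y]/I` is injective, its image is
the subring fixed by the automorphism induced by `-I`, and `dim_ℂ ℂ[a,b,c]/J = |G̃|/2`.
Moreover if `I ⊆ ⟨x,y⟩` then `J ⊆ ⟨a,b,c⟩`. -/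
theorem stmt3 (Gt : Subgroup (GL (Fin 2) ℂ)) [Fintype Gt]
    (hneg : (-1 : GL (Fin 2) ℂ) ∈ Gt)
    (I : Ideal (MvPolynomial (Fin 2) ℂ))
    (hstab : ∀ g ∈ Gt, ∀ f ∈ I, actGL g f ∈ I)
    (hreg : ∃ e : (MvPolynomial (Fin 2) ℂ ⧸ I) ≃ₗ[ℂ] MonoidAlgebra ℂ Gt,
      ∀ (g : Gt) (f : MvPolynomial (Fin 2) ℂ),
        e (Ideal.Quotient.mk I (actGL (g : GL (Fin 2) ℂ) f)) =
          MonoidAlgebra.single g (1 : ℂ) * e (Ideal.Quotient.mk I f)) :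
    Function.Injective
      (Ideal.quotientMap I (sigmaHom : MvPolynomial (Fin 3) ℂ →+* MvPolynomial (Fin 2) ℂ)
        le_rfl) ∧
    (∀ f : MvPolynomial (Fin 2) ℂ,
      (Ideal.Quotient.mk I f ∈ Set.range
          (Ideal.quotientMap I
            (sigmaHom : MvPolynomial (Fin 3) ℂ →+* MvPolynomial (Fin 2) ℂ) le_rfl)) ↔
        Ideal.Quotient.mk I (actGL (-1 : GL (Fin 2) ℂ) f) = Ideal.Quotient.mk I f) ∧
    2 * Module.finrank ℂ
        (MvPolynomial (Fin 3) ℂ ⧸ Ideal.comap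
          (sigmaHom : MvPolynomial (Fin 3) ℂ →+* MvPolynomial (Fin 2) ℂ) I) =
      Fintype.card Gt ∧
    (I ≤ Ideal.span (Set.range (X : Fin 2 → MvPolynomial (Fin 2) ℂ)) →
      Ideal.comap (sigmaHom : MvPolynomial (Fin 3) ℂ →+* MvPolynomial (Fin 2) ℂ) I ≤
        Ideal.span (Set.range (X : Fin 3 → MvPolynomial (Fin 3) ℂ))) := by
  classical
  obtain ⟨e, he⟩ := hreg
  have hstabn : ∀ f ∈ I, negAev f ∈ I := by
    intro f hf
    have h := hstab (-1) hneg f hf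
    rwa [actGL_neg_one] at h
  -- Part 2
  have part2 : ∀ f : MvPolynomial (Fin 2) ℂ,
      (Ideal.Quotient.mk I f ∈ Set.range
          (Ideal.quotientMap I
            (sigmaHom : MvPolynomial (Fin 3) ℂ →+* MvPolynomial (Fin 2) ℂ) le_rfl)) ↔
        Ideal.Quotient.mk I (actGL (-1 : GL (Fin 2) ℂ) f) = Ideal.Quotient.mk I f := by
    intro f
    rw [actGL_neg_one]
    constructor
    · rintro ⟨q, hq⟩
      obtain ⟨p, rfl⟩ := Ideal.Quotient.mk_surjective q
      rw [Ideal.quotientMap_mk] at hq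
      rw [Ideal.Quotient.eq] at hq ⊢
      have h1 : negAev (f - sigmaHom p) ∈ I := by
        apply hstabn
        have := I.neg_mem hq
        simpa using this
      have h2 : negAev f - f = negAev (f - sigmaHom p) + (sigmaHom p - f) := by
        rw [map_sub, negAev_sigma]
        ring
      rw [h2]
      exact I.add_mem h1 hq
    · intro h
      rw [Ideal.Quotient.eq] at h
      set P := (2⁻¹ : ℂ) • (f + negAev f) with hPdef
      have hfix : negAev P = P := by
        rw [hPdef, map_smul, map_add, negAev_invol, add_comm]
      obtain ⟨p, hp⟩ := fixed_mem_range P hfix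
      refine ⟨Ideal.Quotient.mk _ p, ?_⟩
      rw [Ideal.quotientMap_mk,
        show ((sigmaHom : MvPolynomial (Fin 3) ℂ →+* MvPolynomial (Fin 2) ℂ) p) = P from hp,
        Ideal.Quotient.eq]
      have hPf : P - f = (2⁻¹ : ℂ) • (negAev f - f) := by
        rw [hPdef]
        module
      rw [hPf, smul_eq_C_mul]
      exact I.mul_mem_left _ h
  -- Part 3
  have part3 : 2 * Module.finrank ℂ
        (MvPolynomial (Fin 3) ℂ ⧸ Ideal.comap
          (sigmaHom : MvPolynomial (Fin 3) ℂ →+* MvPolynomial (Fin 2) ℂ) I) =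
      Fintype.card Gt := by
    set J : Ideal (MvPolynomial (Fin 3) ℂ) :=
      Ideal.comap (sigmaHom : MvPolynomial (Fin 3) ℂ →+* MvPolynomial (Fin 2) ℂ) I with hJ
    set Q := MvPolynomial (Fin 2) ℂ ⧸ I with hQ
    set g₀ : Gt := ⟨-1, hneg⟩ with hg₀
    have hGL : (-1 : GL (Fin 2) ℂ) ≠ 1 := by
      intro hcon
      have h2 : ((-1 : GL (Fin 2) ℂ) : Matrix (Fin 2) (Fin 2) ℂ)
          = ((1 : GL (Fin 2) ℂ) : Matrix (Fin 2) (Fin 2) ℂ) := congrArg Units.val hcon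
      rw [Units.val_neg, Units.val_one] at h2
      have h3 := congrFun (congrFun h2 0) 0
      simp only [Matrix.neg_apply, Matrix.one_apply_eq] at h3
      norm_num at h3
    have hg : g₀ ≠ 1 := fun hcon => hGL (congrArg Subtype.val hcon)
    have hg2 : g₀ * g₀ = 1 := by
      apply Subtype.ext
      show (-1 : GL (Fin 2) ℂ) * (-1) = 1
      simp
    haveI : Module.Finite ℂ (MonoidAlgebra ℂ Gt) :=
      Module.Finite.of_basis (MonoidAlgebra.basis Gt ℂ : Module.Basis Gt ℂ (MonoidAlgebra ℂ Gt))
    haveI : Module.Finite ℂ Q := Module.Finite.equiv e.symm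
    set L : MonoidAlgebra ℂ Gt →ₗ[ℂ] MonoidAlgebra ℂ Gt :=
      LinearMap.mulLeft ℂ (MonoidAlgebra.single g₀ (1:ℂ)) with hLdef
    have hcm : I ≤ Ideal.comap (actGL (-1 : GL (Fin 2) ℂ)) I := fun x hx => hstab _ hneg x hx
    set τa : Q →ₐ[ℂ] Q := Ideal.quotientMapₐ I (actGL (-1 : GL (Fin 2) ℂ)) hcm with hτadef
    have hτa : ∀ p, τa (Ideal.Quotient.mk I p)
        = Ideal.Quotient.mk I (actGL (-1 : GL (Fin 2) ℂ) p) := fun p => rfl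
    have hint : ∀ x : Q, e (τa x) = L (e x) := by
      intro x
      obtain ⟨p, rfl⟩ := Ideal.Quotient.mk_surjective x
      rw [hτa]
      have h := he g₀ p
      rw [show (g₀ : GL (Fin 2) ℂ) = -1 from rfl] at h
      rw [h]
      rfl
    set FQ : Submodule ℂ Q := LinearMap.ker (τa.toLinearMap - LinearMap.id) with hFQ
    have memFQ : ∀ x : Q, x ∈ FQ ↔ τa x = x := by
      intro x
      rw [hFQ, LinearMap.mem_ker, LinearMap.sub_apply, LinearMap.id_apply, sub_eq_zero]
      rfl
    have hmap : FQ.map (e : Q →ₗ[ℂ] MonoidAlgebra ℂ Gt)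
        = LinearMap.ker (L - LinearMap.id) := by
      ext y
      constructor
      · rintro ⟨x, hx, rfl⟩
        rw [LinearMap.mem_ker, LinearMap.sub_apply, LinearMap.id_apply, sub_eq_zero]
        show L (e x) = e x
        rw [← hint, (memFQ x).mp hx]
      · intro hy
        rw [LinearMap.mem_ker, LinearMap.sub_apply, LinearMap.id_apply, sub_eq_zero] at hy
        refine ⟨e.symm y, (memFQ _).mpr ?_, by simp⟩
        apply e.injective
        rw [hint, LinearEquiv.apply_symm_apply]
        exact hy
    set φ : (MvPolynomial (Fin 3) ℂ ⧸ J) →ₐ[ℂ] Q :=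
      Ideal.quotientMapₐ I sigmaHom (fun x hx => hx) with hφdef
    have hφ : ∀ p, φ (Ideal.Quotient.mk J p) = Ideal.Quotient.mk I (sigmaHom p) :=
      fun p => rfl
    have hφinj : Function.Injective φ := by
      intro x y hxy
      obtain ⟨p, rfl⟩ := Ideal.Quotient.mk_surjective x
      obtain ⟨q, rfl⟩ := Ideal.Quotient.mk_surjective y
      rw [hφ, hφ, Ideal.Quotient.eq] at hxy
      rw [Ideal.Quotient.eq]
      have hmem : sigmaHom (p - q) ∈ I := by rw [map_sub]; exact hxy
      exact Ideal.mem_comap.mpr hmem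
    have hrange : LinearMap.range φ.toLinearMap = FQ := by
      ext x
      constructor
      · rintro ⟨z, rfl⟩
        obtain ⟨p, rfl⟩ := Ideal.Quotient.mk_surjective z
        have hx : φ.toLinearMap (Ideal.Quotient.mk J p) = Ideal.Quotient.mk I (sigmaHom p) :=
          hφ p
        rw [hx, memFQ, hτa, actGL_neg_one, negAev_sigma]
      · intro hx
        obtain ⟨f, rfl⟩ := Ideal.Quotient.mk_surjective x
        rw [memFQ, hτa] at hx
        obtain ⟨q, hq⟩ := (part2 f).mpr hx
        obtain ⟨p, rfl⟩ := Ideal.Quotient.mk_surjective q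
        rw [Ideal.quotientMap_mk] at hq
        refine ⟨Ideal.Quotient.mk J p, ?_⟩
        rw [show φ.toLinearMap (Ideal.Quotient.mk J p)
          = Ideal.Quotient.mk I (sigmaHom p) from hφ p]
        exact hq
    have hφinj' : Function.Injective φ.toLinearMap := hφinj
    haveI : FiniteDimensional ℂ (MvPolynomial (Fin 3) ℂ ⧸ J) :=
      FiniteDimensional.of_injective φ.toLinearMap hφinj'
    have hr1 : Module.finrank ℂ (MvPolynomial (Fin 3) ℂ ⧸ J) = Module.finrank ℂ FQ := by
      rw [← LinearMap.finrank_range_of_inj hφinj', hrange]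
    have hr2 : Module.finrank ℂ FQ
        = Module.finrank ℂ (LinearMap.ker (L - LinearMap.id)) := by
      rw [← hmap, LinearEquiv.finrank_map_eq]
    rw [hr1, hr2, hLdef]
    exact fixrank g₀ hg hg2
  refine ⟨Ideal.quotientMap_injective, part2, part3, ?_⟩
  -- Part 4
  intro hI p hp
  have hσ : sigmaHom p ∈ I := hp
  have h1 : sigmaHom p ∈ Ideal.span ((X : Fin 2 → MvPolynomial (Fin 2) ℂ) '' Set.univ) := by
    rw [Set.image_univ]; exact hI hσ
  rw [mem_ideal_span_X_image] at h1
  have hc0 : constantCoeff (sigmaHom p) = 0 := by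
    by_contra hne
    obtain ⟨i, _, hi⟩ := h1 0 (mem_support_iff.mpr hne)
    simp at hi
  have hp0 : constantCoeff p = 0 := by rw [← constantCoeff_sigma]; exact hc0
  rw [← Set.image_univ, mem_ideal_span_X_image]
  intro m hm
  by_contra hcon
  push_neg at hcon
  have hm0 : m = 0 := Finsupp.ext fun i => hcon i (Set.mem_univ i)
  rw [hm0] at hm
  exact mem_support_iff.mp hm hp0
end

section
/- Let 𝔊 ⊆ GL(n,ℂ) be a finite subgroup acting on S = ℂ[X₁,…,Xₙ] by g·f = f ∘ g⁻¹, and let I ⊆ S be a 𝔊-cluster. Then the zero locus V(I) = {p ∈ ℂⁿ : f(p) = 0 for all f ∈ I} is nonempty and is a single 𝔊-orbit: there exists p ∈ V(I) such that V(I) = {g·p : g ∈ 𝔊}. -/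
open MvPolynomial

set_option maxHeartbeats 1000000
set_option synthInstance.maxHeartbeats 100000

lemma aeval_coe_eval {n : ℕ} (p : Fin n → ℂ) (f : MvPolynomial (Fin n) ℂ) :
    aeval p f = eval p f := by
  rw [← coe_aeval_eq_eval]; rfl

lemma eval_actGL {n : ℕ} (g : GL (Fin n) ℂ) (p : Fin n → ℂ) (f : MvPolynomial (Fin n) ℂ) :
    eval p (actGL g f) =
      eval (Matrix.mulVec ((g⁻¹ : GL (Fin n) ℂ) : Matrix (Fin n) (Fin n) ℂ) p) f := by
  rw [← aeval_coe_eval, ← aeval_coe_eval, actGL]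
  have : (aeval p) ((aeval fun i =>
      ∑ j, ((g⁻¹ : GL (Fin n) ℂ) : Matrix (Fin n) (Fin n) ℂ) i j • X j) f)
      = ((aeval (R := ℂ) p).comp (aeval fun i =>
      ∑ j, ((g⁻¹ : GL (Fin n) ℂ) : Matrix (Fin n) (Fin n) ℂ) i j • X j)) f := rfl
  rw [this, comp_aeval]
  have hfun : (fun i => (aeval (R := ℂ) p)
      (∑ j, ((g⁻¹ : GL (Fin n) ℂ) : Matrix (Fin n) (Fin n) ℂ) i j • X j))
      = Matrix.mulVec ((g⁻¹ : GL (Fin n) ℂ) : Matrix (Fin n) (Fin n) ℂ) p := by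
    funext i
    simp [Matrix.mulVec, dotProduct, smul_eq_mul]
  rw [hfun]

lemma actGL_actGL {n : ℕ} (g h : GL (Fin n) ℂ) (f : MvPolynomial (Fin n) ℂ) :
    actGL g (actGL h f) = actGL (g * h) f := by
  have key : (actGL g).comp (actGL h) = actGL (g * h) := by
    apply MvPolynomial.algHom_ext
    intro i
    simp only [AlgHom.comp_apply, actGL, aeval_X]
    rw [map_sum]
    simp only [map_smul, aeval_X, Finset.smul_sum, smul_smul]
    rw [Finset.sum_comm]
    refine Finset.sum_congr rfl fun k _ => ?_
    rw [← Finset.sum_smul, mul_inv_rev, Units.val_mul, Matrix.mul_apply]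
  exact congrFun (congrArg (fun φ : _ →ₐ[ℂ] _ => ⇑φ) key) f

/-- A polynomial that is `1` at `q` and `0` on a finite set not containing `q`. -/
lemma exists_sep {n : ℕ} (q : Fin n → ℂ) (F : Finset (Fin n → ℂ)) (hq : q ∉ F) :
    ∃ h : MvPolynomial (Fin n) ℂ, eval q h = 1 ∧ ∀ a ∈ F, eval a h = 0 := by
  classical
  induction F using Finset.induction_on with
  | empty => exact ⟨1, by simp, by simp⟩
  | @insert a F ha ih =>
      have haq : a ≠ q := by rintro rfl; exact hq (Finset.mem_insert_self a F)
      obtain ⟨i, hi⟩ := Function.ne_iff.mp haq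
      obtain ⟨h, hh1, hh0⟩ := ih (fun hmem => hq (Finset.mem_insert_of_mem hmem))
      refine ⟨(C (q i - a i)⁻¹ * (X i - C (a i))) * h, ?_, ?_⟩
      · rw [map_mul, hh1, mul_one, map_mul, eval_C, map_sub, eval_X, eval_C,
          inv_mul_cancel₀ (sub_ne_zero.mpr (Ne.symm hi))]
      · intro b hb
        rcases Finset.mem_insert.mp hb with rfl | hb'
        · simp
        · rw [map_mul, hh0 b hb', mul_zero]

/-- For a finite subgroup `𝔊 ⊆ GL(n,ℂ)` and a `𝔊`-cluster `I ⊆ ℂ[X₁,…,Xₙ]`, the zero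
locus `V(I)` is nonempty and is a single `𝔊`-orbit. -/
theorem stmt4 {n : ℕ} (Gg : Subgroup (GL (Fin n) ℂ)) [Fintype Gg]
    (I : Ideal (MvPolynomial (Fin n) ℂ))
    (hstab : ∀ g ∈ Gg, ∀ f ∈ I, actGL g f ∈ I)
    (hreg : ∃ e : (MvPolynomial (Fin n) ℂ ⧸ I) ≃ₗ[ℂ] MonoidAlgebra ℂ Gg,
      ∀ (g : Gg) (f : MvPolynomial (Fin n) ℂ),
        e (Ideal.Quotient.mk I (actGL (g : GL (Fin n) ℂ) f)) =
          MonoidAlgebra.single g (1 : ℂ) * e (Ideal.Quotient.mk I f)) :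
    ∃ p : Fin n → ℂ,
      (∀ f ∈ I, eval p f = 0) ∧
      {q : Fin n → ℂ | ∀ f ∈ I, eval q f = 0} =
        {q : Fin n → ℂ | ∃ g ∈ Gg,
          Matrix.mulVec ((g : GL (Fin n) ℂ) : Matrix (Fin n) (Fin n) ℂ) p = q} := by
  classical
  obtain ⟨e, he⟩ := hreg
  have hI : I ≠ ⊤ := by
    intro htop
    have hsub : Subsingleton (MvPolynomial (Fin n) ℂ ⧸ I) :=
      Ideal.Quotient.subsingleton_iff.mpr htop
    have hsub2 : Subsingleton (MonoidAlgebra ℂ Gg) := e.symm.toEquiv.subsingleton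
    have hz : (MonoidAlgebra.single (1 : Gg) (1 : ℂ)) = 0 := Subsingleton.elim _ _
    exact one_ne_zero (MonoidAlgebra.single_eq_zero.mp hz)
  have hne : (MvPolynomial.zeroLocus ℂ I).Nonempty := by
    rw [Set.nonempty_iff_ne_empty]
    intro hemp
    apply hI
    rw [← Ideal.radical_eq_top, ← MvPolynomial.vanishingIdeal_zeroLocus_eq_radical (K := ℂ), hemp,
      eq_top_iff]
    intro f _
    rw [MvPolynomial.mem_vanishingIdeal_iff]
    intro x hx
    exact absurd hx (Set.notMem_empty x)
  obtain ⟨p, hp⟩ := hne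
  have hpz : ∀ f ∈ I, eval p f = 0 := hp
  refine ⟨p, hpz, Set.eq_of_subset_of_subset ?_ ?_⟩
  · intro q hq
    by_contra hq'
    -- hq' : ¬ ∃ g ∈ Gg, mulVec g p = q
    set Pts : Finset (Fin n → ℂ) :=
      (Finset.univ.image fun g : Gg =>
        Matrix.mulVec (((g : GL (Fin n) ℂ)) : Matrix (Fin n) (Fin n) ℂ) p) ∪
      (Finset.univ.image fun g : Gg =>
        Matrix.mulVec (((g : GL (Fin n) ℂ)) : Matrix (Fin n) (Fin n) ℂ) q) with hPts
    set F : Finset (Fin n → ℂ) := Pts.erase q with hF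
    obtain ⟨h, hh1, hh0⟩ := exists_sep q F (Finset.notMem_erase _ _)
    set H : MvPolynomial (Fin n) ℂ := ∑ g : Gg, actGL (g : GL (Fin n) ℂ) h with hHdef
    have hinv : ∀ g0 : Gg, actGL (g0 : GL (Fin n) ℂ) H = H := by
      intro g0
      rw [hHdef, map_sum]
      calc ∑ g : Gg, actGL (g0 : GL (Fin n) ℂ) (actGL (g : GL (Fin n) ℂ) h)
          = ∑ g : Gg, actGL (((g0 * g : Gg) : GL (Fin n) ℂ)) h := by
            refine Finset.sum_congr rfl fun g _ => ?_
            rw [actGL_actGL]; norm_cast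
        _ = ∑ g : Gg, actGL ((g : GL (Fin n) ℂ)) h := by
            exact Fintype.sum_equiv (Equiv.mulLeft g0) _ _ (fun g => rfl)
    have hpH : eval p H = 0 := by
      rw [hHdef, map_sum]
      apply Finset.sum_eq_zero
      intro g _
      rw [eval_actGL]
      apply hh0
      rw [hF, Finset.mem_erase]
      refine ⟨fun hcon => hq' ⟨(g : GL (Fin n) ℂ)⁻¹, inv_mem g.2, hcon⟩, ?_⟩
      rw [hPts]
      apply Finset.mem_union_left
      exact Finset.mem_image.mpr ⟨g⁻¹, Finset.mem_univ _, by norm_cast⟩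
    have hqterm : ∀ g : Gg, eval q (actGL (g : GL (Fin n) ℂ) h) =
        if Matrix.mulVec ((((g : GL (Fin n) ℂ))⁻¹ : GL (Fin n) ℂ) :
            Matrix (Fin n) (Fin n) ℂ) q = q then 1 else 0 := by
      intro g
      rw [eval_actGL]
      split_ifs with hcase
      · rw [hcase]; exact hh1
      · apply hh0
        rw [hF, Finset.mem_erase]
        refine ⟨hcase, ?_⟩
        rw [hPts]
        apply Finset.mem_union_right
        exact Finset.mem_image.mpr ⟨g⁻¹, Finset.mem_univ _, by norm_cast⟩
    have hqH : eval q H = ((Finset.univ.filter fun g : Gg =>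
        Matrix.mulVec ((((g : GL (Fin n) ℂ))⁻¹ : GL (Fin n) ℂ) :
          Matrix (Fin n) (Fin n) ℂ) q = q).card : ℂ) := by
      rw [hHdef, map_sum]
      simp_rw [hqterm]
      rw [Finset.sum_boole]
    have hqH0 : eval q H ≠ 0 := by
      rw [hqH]
      have hmem : (1 : Gg) ∈ (Finset.univ.filter fun g : Gg =>
          Matrix.mulVec ((((g : GL (Fin n) ℂ))⁻¹ : GL (Fin n) ℂ) :
            Matrix (Fin n) (Fin n) ℂ) q = q) := by
        rw [Finset.mem_filter]
        refine ⟨Finset.mem_univ _, ?_⟩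
        simp [Matrix.one_mulVec]
      exact_mod_cast Nat.cast_ne_zero.mpr (Finset.card_ne_zero_of_mem hmem)
    set v := e (Ideal.Quotient.mk I H) with hv
    set u := e (Ideal.Quotient.mk I 1) with hu
    have hvconst : ∀ g : Gg, v.coeff g = v.coeff 1 := by
      intro g
      have h1 : MonoidAlgebra.single g (1 : ℂ) * v = v := by
        rw [hv, ← he g H, hinv g]
      calc v.coeff g = (MonoidAlgebra.single g (1 : ℂ) * v).coeff g := by rw [h1]
        _ = v.coeff 1 := by rw [MonoidAlgebra.coeff_single_mul_apply]; simp
    have huconst : ∀ g : Gg, u.coeff g = u.coeff 1 := by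
      intro g
      have h1 : MonoidAlgebra.single g (1 : ℂ) * u = u := by
        rw [hu, ← he g 1, map_one (actGL (g : GL (Fin n) ℂ))]
      calc u.coeff g = (MonoidAlgebra.single g (1 : ℂ) * u).coeff g := by rw [h1]
        _ = u.coeff 1 := by rw [MonoidAlgebra.coeff_single_mul_apply]; simp
    set w : MvPolynomial (Fin n) ℂ := C (u.coeff 1) * H - C (v.coeff 1) with hwdef
    have hwI : w ∈ I := by
      rw [← Ideal.Quotient.eq_zero_iff_mem]
      apply e.injective
      rw [e.map_zero]
      have hmkw : Ideal.Quotient.mk I w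
          = (u.coeff 1) • Ideal.Quotient.mk I H - (v.coeff 1) • Ideal.Quotient.mk I 1 := by
        rw [hwdef, map_sub, map_mul]
        simp only [← MvPolynomial.algebraMap_eq, Ideal.Quotient.mk_algebraMap]
        rw [← Algebra.smul_def, Algebra.algebraMap_eq_smul_one,
          (Ideal.Quotient.mk I).map_one]
      rw [hmkw, map_sub, map_smul, map_smul, ← hv, ← hu]
      ext g
      rw [MonoidAlgebra.coeff_sub, Finsupp.sub_apply, MonoidAlgebra.coeff_smul, MonoidAlgebra.coeff_smul,
        Finsupp.smul_apply, Finsupp.smul_apply, smul_eq_mul,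
        smul_eq_mul, hvconst g, huconst g, MonoidAlgebra.coeff_zero, Finsupp.zero_apply]
      ring
    have h0p := hpz w hwI
    have h0q := hq w hwI
    rw [hwdef, map_sub, map_mul, eval_C, eval_C, hpH, mul_zero, zero_sub,
      neg_eq_zero] at h0p
    rw [hwdef, map_sub, map_mul, eval_C, eval_C, h0p, sub_zero, mul_eq_zero] at h0q
    have hu1 : u.coeff 1 = 0 := h0q.resolve_right hqH0
    have hu0 : u = 0 := by
      ext g
      rw [huconst g, hu1]
      rfl
    have hmk1 : Ideal.Quotient.mk I (1 : MvPolynomial (Fin n) ℂ) = 0 := by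
      apply e.injective
      rw [map_zero, ← hu, hu0]
    exact hI (Ideal.eq_top_iff_one I |>.mpr (Ideal.Quotient.eq_zero_iff_mem.mp hmk1))
  · rintro q ⟨g, hg, rfl⟩
    intro f hf
    have h1 : actGL g⁻¹ f ∈ I := hstab g⁻¹ (inv_mem hg) f hf
    have h2 := hpz _ h1
    rwa [eval_actGL, inv_inv] at h2
end

section
/- Let 𝔊 ⊆ GL(n,ℂ) be a finite subgroup acting on S = ℂ[X₁,…,Xₙ] by g·f = f ∘ g⁻¹, and let I ⊆ S be a 𝔊-cluster with I ⊆ ⟨X₁,…,Xₙ⟩. Then every 𝔊-invariant polynomial with zero constant term belongs to I; equivalently, the ideal n_𝔊 of S generated by the non-constant 𝔊-invariant polynomials vanishing at the origin satisfies n_𝔊 ⊆ I. -/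
open MvPolynomial

/-- The ideal `n_𝔊` generated by the `𝔊`-invariant polynomials with zero constant term. -/
noncomputable def invIdeal {n : ℕ} (Gg : Subgroup (GL (Fin n) ℂ)) :
    Ideal (MvPolynomial (Fin n) ℂ) :=
  Ideal.span {f | (∀ g ∈ Gg, actGL g f = f) ∧ constantCoeff f = 0}

set_option synthInstance.maxHeartbeats 1000000 in
private lemma aux_lin {n : ℕ} (Gg : Subgroup (GL (Fin n) ℂ)) (I : Ideal (MvPolynomial (Fin n) ℂ))
    (e : (MvPolynomial (Fin n) ℂ ⧸ I) ≃ₗ[ℂ] MonoidAlgebra ℂ Gg)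
    (u v : MvPolynomial (Fin n) ℂ ⧸ I) (b a : ℂ) :
    e (b • u - a • v) = b • e u - a • e v := by
  rw [map_sub, map_smul, map_smul]

/-- For a finite subgroup `𝔊 ⊆ GL(n,ℂ)` and a `𝔊`-cluster `I ⊆ ⟨X₁,…,Xₙ⟩`, every
`𝔊`-invariant polynomial with zero constant term belongs to `I`, i.e. `n_𝔊 ⊆ I`. -/
theorem stmt6 {n : ℕ} (Gg : Subgroup (GL (Fin n) ℂ)) [Fintype Gg]
    (I : Ideal (MvPolynomial (Fin n) ℂ))
    (hstab : ∀ g ∈ Gg, ∀ f ∈ I, actGL g f ∈ I)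
    (hreg : ∃ e : (MvPolynomial (Fin n) ℂ ⧸ I) ≃ₗ[ℂ] MonoidAlgebra ℂ Gg,
      ∀ (g : Gg) (f : MvPolynomial (Fin n) ℂ),
        e (Ideal.Quotient.mk I (actGL (g : GL (Fin n) ℂ) f)) =
          MonoidAlgebra.single g (1 : ℂ) * e (Ideal.Quotient.mk I f))
    (hI : I ≤ Ideal.span (Set.range (X : Fin n → MvPolynomial (Fin n) ℂ))) :
    invIdeal Gg ≤ I := by
  obtain ⟨e, he⟩ := hreg
  have hcc : ∀ q ∈ Ideal.span (Set.range (X : Fin n → MvPolynomial (Fin n) ℂ)),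
      constantCoeff q = 0 := by
    intro q hq
    have : Ideal.span (Set.range (X : Fin n → MvPolynomial (Fin n) ℂ)) ≤
        RingHom.ker (constantCoeff (R := ℂ) (σ := Fin n)) := by
      rw [Ideal.span_le]
      rintro _ ⟨i, rfl⟩
      simp [RingHom.mem_ker]
    exact this hq
  have hmk : ∀ (c : ℂ) (p : MvPolynomial (Fin n) ℂ),
      Ideal.Quotient.mk I (c • p) = c • Ideal.Quotient.mk I p := fun c p => by
    rw [← Ideal.Quotient.mkₐ_eq_mk ℂ, map_smul]
  have key : ∀ f : MvPolynomial (Fin n) ℂ, (∀ g ∈ Gg, actGL g f = f) →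
      ∀ g : Gg, (e (Ideal.Quotient.mk I f)).coeff g = (e (Ideal.Quotient.mk I f)).coeff 1 := by
    intro f hinv g
    have h := he g f
    rw [hinv g g.2] at h
    have h3 : (e (Ideal.Quotient.mk I f)).coeff g
        = (MonoidAlgebra.single g (1 : ℂ) * e (Ideal.Quotient.mk I f)).coeff g :=
      congrArg (fun y : MonoidAlgebra ℂ Gg => y.coeff g) h
    rw [MonoidAlgebra.coeff_single_mul_apply] at h3
    simpa using h3
  rw [invIdeal, Ideal.span_le]
  rintro f ⟨hinv, hc0⟩
  set x := e (Ideal.Quotient.mk I f) with hxdef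
  set y := e (Ideal.Quotient.mk I 1) with hydef
  set a := x.coeff 1 with hadef
  set b := y.coeff 1 with hbdef
  have hone : ∀ g ∈ Gg, actGL g (1 : MvPolynomial (Fin n) ℂ) = 1 := by
    intro g _; exact map_one _
  have hxy : b • x = a • y := by
    ext h
    have h1 : x.coeff h = a := key f hinv h
    have h2 : y.coeff h = b := key 1 hone h
    rw [MonoidAlgebra.coeff_smul_apply, MonoidAlgebra.coeff_smul_apply, h1, h2]
    exact mul_comm b a
  have hz : e (Ideal.Quotient.mk I (b • f - a • (1 : MvPolynomial (Fin n) ℂ))) = 0 := by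
    rw [map_sub, hmk, hmk, aux_lin Gg I e, ← hxdef, ← hydef, hxy, sub_self]
  have hmem : b • f - a • (1 : MvPolynomial (Fin n) ℂ) ∈ I :=
    Ideal.Quotient.eq_zero_iff_mem.mp (e.map_eq_zero_iff.mp hz)
  have hconst : constantCoeff (b • f - a • (1 : MvPolynomial (Fin n) ℂ)) = 0 :=
    hcc _ (hI hmem)
  have ha : a = 0 := by
    simp [MvPolynomial.smul_eq_C_mul, hc0] at hconst
    exact hconst
  have hx0 : x = 0 := by
    ext h
    have hh := key f hinv h
    rw [← hxdef] at hh
    rw [hh, ← hadef, ha]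
    rfl
  show f ∈ I
  rw [← Ideal.Quotient.eq_zero_iff_mem]
  exact e.map_eq_zero_iff.mp hx0
end

section
/- Let 𝔊 ⊆ GL(n,ℂ) be a finite subgroup acting on S = ℂ[X₁,…,Xₙ] by g·f = f ∘ g⁻¹, let m_S = ⟨X₁,…,Xₙ⟩ and let n_𝔊 be the ideal generated by the 𝔊-invariant polynomials with zero constant term. Let I be an ideal with n_𝔊 ⊆ I ⊆ m_S, and let W ⊆ S be a finite-dimensional 𝔊-stable ℂ-subspace such that I = W·S + n_𝔊, which is minimal in the sense that no proper 𝔊-stable subspace W' ⊊ W satisfies I = W'·S + n_𝔊. Then the ℂ-linear map W → I/(m_S·I + n_𝔊) obtained by composing the inclusion W ⊆ I with the quotient map is a 𝔊-equivariant isomorphism. -/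
open MvPolynomial

/-- The maximal ideal `m_S = ⟨X₁,…,Xₙ⟩` at the origin. -/
noncomputable def maxIdeal (n : ℕ) : Ideal (MvPolynomial (Fin n) ℂ) :=
  Ideal.span (Set.range (X : Fin n → MvPolynomial (Fin n) ℂ))

lemma actGL_X {n : ℕ} (g : GL (Fin n) ℂ) (i : Fin n) :
    actGL g (X i) = ∑ j, ((g⁻¹ : GL (Fin n) ℂ) : Matrix (Fin n) (Fin n) ℂ) i j • X j :=
  aeval_X _ i

lemma actGL_one {n : ℕ} (f : MvPolynomial (Fin n) ℂ) : actGL (1 : GL (Fin n) ℂ) f = f := by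
  have : actGL (1 : GL (Fin n) ℂ) = AlgHom.id ℂ _ := by
    apply MvPolynomial.algHom_ext
    intro i
    simp [actGL_X, Matrix.one_apply, ite_smul, Finset.sum_ite_eq]
  simp [this]

lemma actGL_cancel {n : ℕ} (g : GL (Fin n) ℂ) (f : MvPolynomial (Fin n) ℂ) :
    actGL g (actGL g⁻¹ f) = f := by
  rw [actGL_actGL, mul_inv_cancel, actGL_one]

lemma constantCoeff_actGL_X {n : ℕ} (g : GL (Fin n) ℂ) (i : Fin n) :
    constantCoeff (actGL g (X i)) = 0 := by
  simp [actGL_X]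



lemma stab_inv {n : ℕ} {Gg : Subgroup (GL (Fin n) ℂ)} {g : GL (Fin n) ℂ} (hg : g ∈ Gg)
    {f : MvPolynomial (Fin n) ℂ} (hf : f ∈ invIdeal Gg) : actGL g f ∈ invIdeal Gg := by
  refine Submodule.span_induction ?_ ?_ ?_ ?_ hf
  · intro x hx
    rw [hx.1 g hg]
    exact Ideal.subset_span hx
  · simp
  · intro x y _ _ hx hy; rw [map_add]; exact add_mem hx hy
  · intro s x _ hx
    rw [smul_eq_mul, map_mul]
    exact Ideal.mul_mem_left _ _ hx

lemma stab_max {n : ℕ} (g : GL (Fin n) ℂ)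
    {f : MvPolynomial (Fin n) ℂ} (hf : f ∈ maxIdeal n) : actGL g f ∈ maxIdeal n := by
  refine Submodule.span_induction ?_ ?_ ?_ ?_ hf
  · rintro x ⟨i, rfl⟩
    rw [actGL_X]
    exact Submodule.sum_mem _ fun j _ =>
      Submodule.smul_of_tower_mem _ _ (Ideal.subset_span ⟨j, rfl⟩)
  · simp
  · intro x y _ _ hx hy; rw [map_add]; exact add_mem hx hy
  · intro s x _ hx
    rw [smul_eq_mul, map_mul]
    exact Ideal.mul_mem_left _ _ hx

-- monomial factorization helper
lemma monomial_factor {n : ℕ} (s : Fin n →₀ ℕ) (c : ℂ) (i : Fin n) (k : ℕ) (hk : k ≤ s i) :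
    monomial s c = monomial (s - Finsupp.single i k) c * (X i) ^ k := by
  have hs : (s - Finsupp.single i k) + Finsupp.single i k = s := by
    ext j
    rw [Finsupp.add_apply, Finsupp.tsub_apply, Finsupp.single_apply]
    by_cases h : i = j
    · rw [if_pos h]
      subst h
      omega
    · rw [if_neg h]
      omega
  rw [X_pow_eq_monomial, monomial_mul, mul_one, hs]

lemma mem_maxIdeal_of_cc {n : ℕ} {f : MvPolynomial (Fin n) ℂ} (hf : constantCoeff f = 0) :
    f ∈ maxIdeal n := by
  rw [as_sum f]
  refine Submodule.sum_mem _ fun s hs => ?_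
  have hs0 : s ≠ 0 := by
    rintro rfl
    rw [mem_support_iff] at hs
    exact hs hf
  obtain ⟨i, hi⟩ := Finsupp.ne_iff.mp hs0
  simp only [Finsupp.coe_zero, Pi.zero_apply] at hi
  rw [monomial_factor s _ i 1 (Nat.one_le_iff_ne_zero.mpr hi), pow_one]
  exact Ideal.mul_mem_left _ _ (Ideal.subset_span ⟨i, rfl⟩)

/-- Ideal of polynomials all of whose monomials have degree ≥ N. -/
noncomputable def degIdeal (n N : ℕ) : Ideal (MvPolynomial (Fin n) ℂ) where
  carrier := {f | ∀ s ∈ f.support, N ≤ s.sum fun _ e => e}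
  zero_mem' := by simp
  add_mem' := by
    classical
    intro a b ha hb s hs
    rcases Finset.mem_union.mp (MvPolynomial.support_add hs) with h | h
    · exact ha s h
    · exact hb s h
  smul_mem' := by
    classical
    intro c f hf s hs
    rw [smul_eq_mul] at hs
    obtain ⟨a, ha, b, hb, rfl⟩ := Finset.mem_add.mp (MvPolynomial.support_mul c f hs)
    have : (a + b).sum (fun _ e => e) = a.sum (fun _ e => e) + b.sum (fun _ e => e) :=
      Finsupp.sum_add_index' (fun _ => rfl) (fun _ _ _ => rfl)
    rw [this]
    exact le_add_of_nonneg_of_le (Nat.zero_le _) (hf b hb)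

lemma degIdeal_mul {n : ℕ} {a b : ℕ} {f g : MvPolynomial (Fin n) ℂ}
    (hf : f ∈ degIdeal n a) (hg : g ∈ degIdeal n b) : f * g ∈ degIdeal n (a + b) := by
  classical
  intro s hs
  obtain ⟨u, hu, v, hv, rfl⟩ := Finset.mem_add.mp (MvPolynomial.support_mul f g hs)
  have : (u + v).sum (fun _ e => e) = u.sum (fun _ e => e) + v.sum (fun _ e => e) :=
    Finsupp.sum_add_index' (fun _ => rfl) (fun _ _ _ => rfl)
  rw [this]
  exact add_le_add (hf u hu) (hg v hv)

lemma maxIdeal_pow_le_degIdeal {n : ℕ} (k : ℕ) : maxIdeal n ^ k ≤ degIdeal n k := by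
  induction k with
  | zero => intro f _ s _; exact Nat.zero_le _
  | succ k ih =>
      rw [pow_succ]
      refine Ideal.mul_le.mpr fun r hr s hs => ?_
      have h1 : s ∈ degIdeal n 1 := by
        refine Ideal.span_le.mpr ?_ hs
        rintro x ⟨i, rfl⟩
        intro t ht
        rw [MvPolynomial.support_X] at ht
        rw [Finset.mem_singleton] at ht
        subst ht
        simp
      exact degIdeal_mul (ih hr) h1

lemma X_pow_card_mem_invIdeal {n : ℕ} (Gg : Subgroup (GL (Fin n) ℂ)) [Fintype Gg] (i : Fin n) :
    (X i : MvPolynomial (Fin n) ℂ) ^ (Fintype.card Gg) ∈ invIdeal Gg := by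
  classical
  set q := Fintype.card Gg with hq
  set u : Gg → MvPolynomial (Fin n) ℂ := fun g => actGL (g : GL (Fin n) ℂ) (X i) with hu
  set P : Polynomial (MvPolynomial (Fin n) ℂ) :=
    ∏ g : Gg, (Polynomial.X - Polynomial.C (u g)) with hP
  set R : Polynomial (MvPolynomial (Fin n) ℂ) := Polynomial.X ^ q - P with hR
  have hPeval : P.eval (X i) = 0 := by
    rw [hP, Polynomial.eval_prod]
    refine Finset.prod_eq_zero (Finset.mem_univ (1 : Gg)) ?_
    simp [hu, actGL_one]
  have hcoeff : ∀ j, R.coeff j ∈ invIdeal Gg := by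
    intro j
    refine Ideal.subset_span ⟨?_, ?_⟩
    · intro g hg
      have hmap : R.map ((actGL g).toRingHom) = R := by
        rw [hR, Polynomial.map_sub, Polynomial.map_pow, Polynomial.map_X, hP,
          Polynomial.map_prod]
        congr 1
        simp only [Polynomial.map_sub, Polynomial.map_X, Polynomial.map_C]
        refine Fintype.prod_equiv (Equiv.mulLeft (⟨g, hg⟩ : Gg)) _ _ fun h => ?_
        congr 2
        show actGL g (u h) = u ((⟨g, hg⟩ : Gg) * h)
        rw [hu]
        simp only [Subgroup.coe_mul]
        exact actGL_actGL _ _ _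
      conv_rhs => rw [← hmap]
      rw [Polynomial.coeff_map]
      rfl
    · have hmap : R.map (constantCoeff : MvPolynomial (Fin n) ℂ →+* ℂ) = 0 := by
        rw [hR, Polynomial.map_sub, Polynomial.map_pow, Polynomial.map_X, hP,
          Polynomial.map_prod]
        have : ∀ g : Gg, ((Polynomial.X - Polynomial.C (u g)).map
            (constantCoeff : MvPolynomial (Fin n) ℂ →+* ℂ)) = Polynomial.X := by
          intro g
          rw [Polynomial.map_sub, Polynomial.map_X, Polynomial.map_C]
          simp [hu, constantCoeff_actGL_X]
        rw [Finset.prod_congr rfl fun g _ => this g]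
        simp [hq, Finset.prod_const, Finset.card_univ]
      have := congrArg (fun p => Polynomial.coeff p j) hmap
      simpa [Polynomial.coeff_map] using this
  have heval : R.eval (X i) = (X i) ^ q := by
    rw [hR, Polynomial.eval_sub, Polynomial.eval_pow, Polynomial.eval_X, hPeval, sub_zero]
  rw [← heval, Polynomial.eval_eq_sum, Polynomial.sum_def]
  exact Submodule.sum_mem _ fun e _ => Ideal.mul_mem_right _ _ (hcoeff e)

lemma degIdeal_le_invIdeal {n : ℕ} (Gg : Subgroup (GL (Fin n) ℂ)) [Fintype Gg] :
    degIdeal n (n * (Fintype.card Gg - 1) + 1) ≤ invIdeal Gg := by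
  classical
  set q := Fintype.card Gg with hq
  intro f hf
  rw [as_sum f]
  refine Submodule.sum_mem _ fun s hs => ?_
  have hdeg := hf s hs
  have : ∃ i, q ≤ s i := by
    by_contra h
    push_neg at h
    have : s.sum (fun _ e => e) ≤ n * (q - 1) := by
      calc s.sum (fun _ e => e) = ∑ j ∈ s.support, s j := rfl
        _ ≤ ∑ j : Fin n, s j := Finset.sum_le_sum_of_subset (Finset.subset_univ _)
        _ ≤ ∑ _j : Fin n, (q - 1) := Finset.sum_le_sum fun j _ => by
              have := h j; omega
        _ = n * (q - 1) := by simp [Finset.sum_const, Finset.card_univ, mul_comm]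
    omega
  obtain ⟨i, hi⟩ := this
  rw [monomial_factor s _ i q hi]
  exact Ideal.mul_mem_left _ _ (X_pow_card_mem_invIdeal Gg i)

lemma nakayama {n : ℕ} (Gg : Subgroup (GL (Fin n) ℂ)) [Fintype Gg]
    (J I : Ideal (MvPolynomial (Fin n) ℂ))
    (h : I ≤ J ⊔ maxIdeal n * I) : I ≤ J ⊔ invIdeal Gg := by
  set m := maxIdeal n
  have key : ∀ k : ℕ, I ≤ J ⊔ m ^ (k + 1) * I := by
    intro k
    induction k with
    | zero => simpa [pow_one] using h
    | succ k ih =>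
        refine h.trans ?_
        refine sup_le le_sup_left ?_
        calc m * I ≤ m * (J ⊔ m ^ (k + 1) * I) := Ideal.mul_mono_right ih
          _ = m * J ⊔ m * (m ^ (k + 1) * I) := Ideal.mul_sup _ _ _
          _ ≤ J ⊔ m ^ (k + 2) * I := by
              refine sup_le (le_sup_of_le_left Ideal.mul_le_right) (le_sup_of_le_right ?_)
              rw [← mul_assoc, ← pow_succ']
  set N := n * (Fintype.card Gg - 1) + 1 with hN
  have h1 : I ≤ J ⊔ m ^ N * I := by
    have : N = (N - 1) + 1 := by omega
    rw [this]
    exact key _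
  refine h1.trans (sup_le le_sup_left (le_sup_of_le_right ?_))
  exact (Ideal.mul_le_left.trans (maxIdeal_pow_le_degIdeal N)).trans (degIdeal_le_invIdeal Gg)

set_option maxHeartbeats 1000000 in
/-- Let `n_𝔊 ⊆ I ⊆ m_S` and let `W` be a finite-dimensional `𝔊`-stable subspace with
`I = W·S + n_𝔊`, minimal with this property.  Then `m_S·I + n_𝔊` is `𝔊`-stable and the
ℂ-linear map `W → I/(m_S·I + n_𝔊)` (inclusion followed by the quotient map) is a
`𝔊`-equivariant isomorphism: it is injective with image exactly `I/(m_S·I + n_𝔊)`. -/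
theorem stmt7 {n : ℕ} (Gg : Subgroup (GL (Fin n) ℂ)) [Fintype Gg]
    (I : Ideal (MvPolynomial (Fin n) ℂ))
    (hnI : invIdeal Gg ≤ I) (hIm : I ≤ maxIdeal n)
    (W : Submodule ℂ (MvPolynomial (Fin n) ℂ)) [FiniteDimensional ℂ W]
    (hWstab : ∀ g ∈ Gg, ∀ f ∈ W, actGL g f ∈ W)
    (hgen : Ideal.span (W : Set (MvPolynomial (Fin n) ℂ)) + invIdeal Gg = I)
    (hmin : ∀ W' : Submodule ℂ (MvPolynomial (Fin n) ℂ), W' < W →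
      (∀ g ∈ Gg, ∀ f ∈ W', actGL g f ∈ W') →
      Ideal.span (W' : Set (MvPolynomial (Fin n) ℂ)) + invIdeal Gg ≠ I) :
    (∀ g ∈ Gg, ∀ v ∈ (maxIdeal n * I + invIdeal Gg : Ideal (MvPolynomial (Fin n) ℂ)),
        actGL g v ∈ (maxIdeal n * I + invIdeal Gg : Ideal (MvPolynomial (Fin n) ℂ))) ∧
    Function.Injective
      ((Submodule.restrictScalars ℂ (maxIdeal n * I + invIdeal Gg)).mkQ.comp W.subtype) ∧
    LinearMap.range
        ((Submodule.restrictScalars ℂ (maxIdeal n * I + invIdeal Gg)).mkQ.comp W.subtype) =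
      Submodule.map (Submodule.restrictScalars ℂ (maxIdeal n * I + invIdeal Gg)).mkQ
        (Submodule.restrictScalars ℂ I) := by
  classical
  set S := MvPolynomial (Fin n) ℂ with hS
  set m : Ideal S := maxIdeal n with hm
  set nn : Ideal S := invIdeal Gg with hnn
  set K : Ideal S := m * I + nn with hK
  have hKsup : K = m * I ⊔ nn := by rw [hK, Submodule.add_eq_sup]
  have hIsup : Ideal.span (W : Set S) ⊔ nn = I := by
    rw [← Submodule.add_eq_sup]; exact hgen
  have spanW_le_I : Ideal.span (W : Set S) ≤ I := le_sup_left.trans hIsup.le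
  have W_le_I : ∀ f ∈ W, f ∈ I := fun f hf => spanW_le_I (Ideal.subset_span hf)
  -- stability of span W
  have stab_spanW : ∀ g ∈ Gg, ∀ f ∈ Ideal.span (W : Set S), actGL g f ∈ Ideal.span (W : Set S) := by
    intro g hg f hf
    refine Submodule.span_induction ?_ ?_ ?_ ?_ hf
    · intro x hx; exact Ideal.subset_span (hWstab g hg x hx)
    · simp
    · intro x y _ _ hx hy; rw [map_add]; exact add_mem hx hy
    · intro s x _ hx; rw [smul_eq_mul, map_mul]; exact Ideal.mul_mem_left _ _ hx
  have stab_I : ∀ g ∈ Gg, ∀ f ∈ I, actGL g f ∈ I := by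
    intro g hg f hf
    rw [← hIsup] at hf ⊢
    obtain ⟨a, ha, b, hb, rfl⟩ := Submodule.mem_sup.mp hf
    rw [map_add]
    exact Submodule.add_mem _ (Submodule.mem_sup_left (stab_spanW g hg a ha))
      (Submodule.mem_sup_right (stab_inv hg hb))
  have stab_K : ∀ g ∈ Gg, ∀ v ∈ K, actGL g v ∈ K := by
    intro g hg v hv
    rw [hKsup] at hv ⊢
    obtain ⟨a, ha, b, hb, rfl⟩ := Submodule.mem_sup.mp hv
    rw [map_add]
    refine Submodule.add_mem _ (Submodule.mem_sup_left ?_) (Submodule.mem_sup_right (stab_inv hg hb))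
    refine Submodule.mul_induction_on ha ?_ ?_
    · intro x hx y hy
      rw [map_mul]
      exact Ideal.mul_mem_mul (stab_max g hx) (stab_I g hg y hy)
    · intro x y hx hy; rw [map_add]; exact add_mem hx hy
  -- the group-averaged projection
  haveI : Nonempty Gg := One.instNonempty
  set q := Fintype.card Gg with hq
  have hq0 : (q : ℂ) ≠ 0 := Nat.cast_ne_zero.mpr Fintype.card_ne_zero
  set K' : Submodule ℂ W := Submodule.comap W.subtype (Submodule.restrictScalars ℂ K) with hK'
  set ρ : Gg → (W →ₗ[ℂ] W) := fun g => LinearMap.codRestrict W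
    (((actGL (g : GL (Fin n) ℂ)).toLinearMap).comp W.subtype)
    (fun w => hWstab g g.2 w.1 w.2) with hρ
  have ρ_coe : ∀ (g : Gg) (w : W), (ρ g w : S) = actGL (g : GL (Fin n) ℂ) (w : S) := by
    intro g w; rfl
  have ρ_mul : ∀ (g h : Gg) (w : W), ρ g (ρ h w) = ρ (g * h) w := by
    intro g h w
    ext
    rw [ρ_coe, ρ_coe, ρ_coe, Subgroup.coe_mul, actGL_actGL]
  have ρ_cancel : ∀ (g : Gg) (w : W), ρ g (ρ g⁻¹ w) = w := by
    intro g w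
    rw [ρ_mul, mul_inv_cancel]
    ext
    rw [ρ_coe, Subgroup.coe_one, actGL_one]
  have ρ_K' : ∀ (g : Gg) (w : W), w ∈ K' → ρ g w ∈ K' := by
    intro g w hw
    simp only [hK', Submodule.mem_comap, Submodule.restrictScalars_mem] at hw ⊢
    rw [Submodule.coe_subtype, ρ_coe]
    exact stab_K _ g.2 _ hw
  obtain ⟨Co, hCo⟩ := Submodule.exists_isCompl K'
  set p : W →ₗ[ℂ] W := K'.subtype ∘ₗ (K'.projectionOnto Co hCo) with hp
  have hp_mem : ∀ w : W, p w ∈ K' := fun w => (K'.projectionOnto Co hCo w).2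
  have hp_id : ∀ w ∈ K', p w = w := by
    intro w hw
    have := Submodule.linearProjOfIsCompl_apply_left hCo ⟨w, hw⟩
    rw [hp]
    simp only [LinearMap.comp_apply]
    rw [show w = ((⟨w, hw⟩ : K') : W) from rfl, this]
    rfl
  set π : W →ₗ[ℂ] W := (q : ℂ)⁻¹ • ∑ g : Gg, (ρ g ∘ₗ p ∘ₗ ρ g⁻¹) with hπ
  have pi_apply : ∀ w : W, π w = (q : ℂ)⁻¹ • ∑ g : Gg, ρ g (p (ρ g⁻¹ w)) := by
    intro w
    simp [hπ, LinearMap.sum_apply]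
  have pi_mem_K' : ∀ w : W, π w ∈ K' := by
    intro w
    rw [pi_apply]
    exact Submodule.smul_mem _ _ (Submodule.sum_mem _ fun g _ => ρ_K' g _ (hp_mem _))
  have pi_id : ∀ w ∈ K', π w = w := by
    intro w hw
    rw [pi_apply]
    have : ∀ g : Gg, ρ g (p (ρ g⁻¹ w)) = w := by
      intro g
      rw [hp_id _ (ρ_K' g⁻¹ w hw), ρ_cancel]
    rw [Finset.sum_congr rfl fun g _ => this g, Finset.sum_const, Finset.card_univ,
      ← hq, ← Nat.cast_smul_eq_nsmul ℂ q w, smul_smul, inv_mul_cancel₀ hq0, one_smul]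
  have pi_equiv : ∀ (h : Gg) (w : W), π (ρ h w) = ρ h (π w) := by
    intro h w
    rw [pi_apply, pi_apply, map_smul, map_sum]
    congr 1
    refine Fintype.sum_equiv (Equiv.mulLeft h⁻¹) _ _ fun g => ?_
    simp only [Equiv.coe_mulLeft]
    rw [ρ_mul h (h⁻¹ * g), mul_inv_cancel_left, mul_inv_rev, inv_inv, ← ρ_mul g⁻¹ h w]
  -- injectivity: K' = ⊥
  have hker : K' = ⊥ := by
    by_contra hne
    obtain ⟨k, hkK', hk0⟩ := (Submodule.ne_bot_iff K').mp hne
    set W' : Submodule ℂ S := Submodule.map W.subtype (LinearMap.ker π) with hW'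
    have hW'leW : W' ≤ W := by
      rintro x ⟨w, _, rfl⟩
      exact w.2
    have hW'ne : (k : S) ∉ W' := by
      rintro ⟨w, hwker, hwk⟩
      have hwk' : w = k := Subtype.ext hwk
      subst hwk'
      have hpk := pi_id w hkK'
      rw [LinearMap.mem_ker.mp hwker] at hpk
      exact hk0 hpk.symm
    have hlt : W' < W := lt_of_le_of_ne hW'leW (fun h => hW'ne (h.symm ▸ k.2))
    have hstab' : ∀ g ∈ Gg, ∀ f ∈ W', actGL g f ∈ W' := by
      intro g hg f hf
      obtain ⟨w, hwker, rfl⟩ := hf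
      refine ⟨ρ ⟨g, hg⟩ w, ?_, (ρ_coe _ _)⟩
      simp only [SetLike.mem_coe, LinearMap.mem_ker] at hwker ⊢
      rw [pi_equiv, hwker, map_zero]
    set J : Ideal S := Ideal.span (W' : Set S) ⊔ nn with hJ
    have spanW'_le_I : Ideal.span (W' : Set S) ≤ I :=
      Ideal.span_le.mpr fun x hx => W_le_I x (hW'leW hx)
    have hJleI : J ≤ I := sup_le spanW'_le_I hnI
    have h1 : I ≤ J ⊔ m * I := by
      refine le_of_eq_of_le hIsup.symm (sup_le ?_ (le_sup_of_le_left le_sup_right))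
      refine Ideal.span_le.mpr fun w hw => ?_
      simp only [SetLike.mem_coe] at hw ⊢
      set w' : W := ⟨w, hw⟩ with hww
      have h2 : ((w' - π w' : W) : S) ∈ W' := by
        refine ⟨w' - π w', ?_, rfl⟩
        simp only [SetLike.mem_coe, LinearMap.mem_ker]
        rw [map_sub, pi_id _ (pi_mem_K' w'), sub_self]
      have h3 : ((π w' : W) : S) ∈ K := pi_mem_K' w'
      have hsplit : w = ((w' - π w' : W) : S) + ((π w' : W) : S) := by
        rw [Submodule.coe_sub]
        ring
      rw [hsplit]
      refine add_mem (Submodule.mem_sup_left (Submodule.mem_sup_left (Ideal.subset_span h2))) ?_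
      rw [hKsup] at h3
      rcases Submodule.mem_sup.mp h3 with ⟨a, ha, b, hb, hab⟩
      rw [← hab]
      exact add_mem (Submodule.mem_sup_right ha)
        (Submodule.mem_sup_left (Submodule.mem_sup_right hb))
    have h2 : I ≤ J := (nakayama Gg J I h1).trans (sup_le le_rfl le_sup_right)
    refine hmin W' hlt hstab' ?_
    rw [Submodule.add_eq_sup, ← hJ]
    exact le_antisymm hJleI h2
  have hinj : Function.Injective ((Submodule.restrictScalars ℂ K).mkQ.comp W.subtype) := by
    rw [← LinearMap.ker_eq_bot, LinearMap.ker_comp, Submodule.ker_mkQ]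
    exact hker
  have hT : ∀ x ∈ I, x ∈ (W ⊔ Submodule.restrictScalars ℂ K : Submodule ℂ S) := by
    intro x hx
    rw [← hIsup] at hx
    obtain ⟨a, ha, b, hb, rfl⟩ := Submodule.mem_sup.mp hx
    refine add_mem ?_ (Submodule.mem_sup_right ?_)
    · have key : ∀ f ∈ Ideal.span (W : Set S),
          f ∈ (W ⊔ Submodule.restrictScalars ℂ K : Submodule ℂ S) ∧
            f ∈ Ideal.span (W : Set S) := by
        intro f hf
        refine Submodule.span_induction ?_ ?_ ?_ ?_ hf
        · intro y hy
          simp only [SetLike.mem_coe] at hy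
          exact ⟨Submodule.mem_sup_left hy, Ideal.subset_span hy⟩
        · exact ⟨zero_mem _, zero_mem _⟩
        · rintro y z _ _ ⟨hy1, hy2⟩ ⟨hz1, hz2⟩
          exact ⟨add_mem hy1 hz1, add_mem hy2 hz2⟩
        · rintro s y _ ⟨hy1, hy2⟩
          refine ⟨?_, Submodule.smul_mem _ _ hy2⟩
          have hdecomp : s • y = (constantCoeff s) • y + (s - C (constantCoeff s)) * y := by
            rw [smul_eq_mul, MvPolynomial.smul_eq_C_mul, sub_mul]
            ring
          rw [hdecomp]
          refine add_mem (Submodule.smul_mem _ _ hy1) (Submodule.mem_sup_right ?_)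
          show (s - C (constantCoeff s)) * y ∈ K
          have hmem : s - C (constantCoeff s) ∈ m := mem_maxIdeal_of_cc (by simp)
          rw [hKsup]
          exact Submodule.mem_sup_left (Ideal.mul_mem_mul hmem (spanW_le_I hy2))
      exact (key a ha).1
    · show b ∈ K
      rw [hKsup]
      exact Submodule.mem_sup_right hb
  have hrange : LinearMap.range ((Submodule.restrictScalars ℂ K).mkQ.comp W.subtype) =
      Submodule.map (Submodule.restrictScalars ℂ K).mkQ (Submodule.restrictScalars ℂ I) := by
    rw [LinearMap.range_comp, Submodule.range_subtype]
    apply le_antisymm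
    · exact Submodule.map_mono (fun x hx => W_le_I x hx)
    · rintro y ⟨x, hx, rfl⟩
      obtain ⟨w, hw, u, hu, rfl⟩ := Submodule.mem_sup.mp (hT x hx)
      refine ⟨w, hw, ?_⟩
      rw [map_add]
      have hu0 : (Submodule.restrictScalars ℂ K).mkQ u = 0 := by
        rw [Submodule.mkQ_apply, Submodule.Quotient.mk_eq_zero]
        exact hu
      rw [hu0, add_zero]
  exact ⟨stab_K, hinj, hrange⟩
end

section
/- Let R be a commutative ring, τ a finite group whose order is invertible in R, Q an R-module equipped with an R-linear action of τ, and N any R-module, with τ acting on Q ⊗_R N through the first factor. Then the natural R-linear map Q^τ ⊗_R N → (Q ⊗_R N)^τ induced by the inclusion Q^τ ⊆ Q is an isomorphism. -/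
/-- The submodule of invariants of a family of endomorphisms. -/
def invariantsOf {R Q τ : Type*} [CommRing R] [AddCommGroup Q] [Module R Q]
    (a : τ → Module.End R Q) : Submodule R Q where
  carrier := {x | ∀ t, a t x = x}
  add_mem' := by
    intro x y hx hy t
    rw [map_add, hx t, hy t]
  zero_mem' := by
    intro t
    rw [map_zero]
  smul_mem' := by
    intro c x hx t
    rw [map_smul, hx t]

/-- Let `τ` be a finite group whose order is invertible in `R`, acting `R`-linearly on
`Q`, and let `N` be any `R`-module, `τ` acting on `Q ⊗_R N` through the first factor.
The natural map `Q^τ ⊗_R N → (Q ⊗_R N)^τ` induced by the inclusion `Q^τ ⊆ Q` is an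
isomorphism: the map `Q^τ ⊗_R N → Q ⊗_R N` is injective with range `(Q ⊗_R N)^τ`. -/
theorem stmt12 {R Q N τ : Type*} [CommRing R] [AddCommGroup Q] [Module R Q]
    [AddCommGroup N] [Module R N] [Group τ] [Finite τ]
    (hord : IsUnit ((Nat.card τ : R)))
    (a : τ →* Module.End R Q) :
    Function.Injective (LinearMap.rTensor N (invariantsOf (fun t => a t)).subtype) ∧
    LinearMap.range (LinearMap.rTensor N (invariantsOf (fun t => a t)).subtype) =
      invariantsOf (fun t => LinearMap.rTensor N (a t)) := by
  have : Fintype τ := Fintype.ofFinite τ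
  set M := invariantsOf (fun t => a t) with hM
  obtain ⟨u, hu⟩ := hord
  set c : R := ↑u⁻¹ with hc
  have hcn : c * (Nat.card τ : R) = 1 := by
    rw [hc, ← hu]; exact u.inv_mul
  set e : Module.End R Q := c • ∑ t, (a t : Module.End R Q) with he
  have hsum : ∀ (s : τ) (x : Q), (∑ t, a t (a s x)) = ∑ t, a t x := by
    intro s x
    refine Fintype.sum_equiv (Equiv.mulRight s) _ _ (fun t => ?_)
    simp [Equiv.coe_mulRight, map_mul, Module.End.mul_apply]
  have he_mem : ∀ x, e x ∈ M := by
    intro x s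
    show a s (e x) = e x
    simp only [he, LinearMap.smul_apply, LinearMap.sum_apply, map_smul, map_sum]
    congr 1
    refine Fintype.sum_equiv (Equiv.mulLeft s) _ _ (fun t => ?_)
    simp [Equiv.coe_mulLeft, ← Module.End.mul_apply, ← map_mul]
  have he_fix : ∀ x ∈ M, e x = x := by
    intro x hx
    have : ∀ t : τ, a t x = x := hx
    simp only [he, LinearMap.smul_apply, LinearMap.sum_apply, this,
      Finset.sum_const, Finset.card_univ, ← Nat.card_eq_fintype_card]
    rw [← Nat.cast_smul_eq_nsmul R, smul_smul, hcn, one_smul]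
  set π : Q →ₗ[R] M := LinearMap.codRestrict M e he_mem with hπ
  have hπs : π ∘ₗ M.subtype = LinearMap.id := by
    ext x
    exact he_fix x x.2
  have hsπ : M.subtype ∘ₗ π = e := by
    ext x; rfl
  have hinj : Function.Injective (LinearMap.rTensor N M.subtype) := by
    have : Function.LeftInverse (LinearMap.rTensor N π) (LinearMap.rTensor N M.subtype) := by
      intro y
      rw [← LinearMap.comp_apply, ← LinearMap.rTensor_comp, hπs, LinearMap.rTensor_id,
        LinearMap.id_apply]
    exact this.injective
  refine ⟨hinj, le_antisymm ?_ ?_⟩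
  · rintro _ ⟨z, rfl⟩ t
    rw [← LinearMap.comp_apply, ← LinearMap.rTensor_comp]
    congr 2
    ext x
    exact x.2 t
  · intro y hy
    have hter : ∀ t : τ, LinearMap.rTensor N (a t) y = y := hy
    have key : LinearMap.rTensor N e y = y := by
      have hsum' : LinearMap.rTensor N (∑ t : τ, (a t : Module.End R Q)) =
          ∑ t : τ, LinearMap.rTensor N (a t) := map_sum (LinearMap.rTensorHom N) _ _
      rw [he, LinearMap.rTensor_smul, hsum']
      simp only [LinearMap.smul_apply, LinearMap.sum_apply, hter, Finset.sum_const,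
        Finset.card_univ, ← Nat.card_eq_fintype_card]
      rw [← Nat.cast_smul_eq_nsmul R, smul_smul, hcn, one_smul]
    refine ⟨LinearMap.rTensor N π y, ?_⟩
    rw [← LinearMap.comp_apply, ← LinearMap.rTensor_comp, hsπ, key]
end

section
/- Fix n ≥ 2 and a primitive n-th root of unity ζ ∈ ℂ, and let the cyclic group of order n act on ℂ[a,b,c] by ℂ-algebra automorphisms with a chosen generator acting by a ↦ ζa, b ↦ ζ⁻¹b, c ↦ c. Then the subalgebra of invariant polynomials equals the ℂ-subalgebra generated by aⁿ, bⁿ, ab and c. -/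
open MvPolynomial

private lemma phi_monomial (ζ : ℂ) (d : Fin 3 →₀ ℕ) (r : ℂ) :
    aeval ![C ζ * X 0, C ζ⁻¹ * X 1, X 2] (monomial d r)
      = C (ζ ^ (d 0) * ζ⁻¹ ^ (d 1)) * monomial d r := by
  rw [aeval_monomial, Finsupp.prod_fintype _ _ (fun i => pow_zero _), Fin.prod_univ_three]
  simp only [Matrix.cons_val_zero, Matrix.cons_val_one, Matrix.head_cons,
    Matrix.cons_val_two, Matrix.tail_cons]
  rw [monomial_eq, Finsupp.prod_fintype _ _ (fun i => pow_zero _), Fin.prod_univ_three]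
  simp only [mul_pow, ← C_pow, algebraMap_eq, C_mul]
  ring

private lemma coeff_phi (ζ : ℂ) (f : MvPolynomial (Fin 3) ℂ) (d : Fin 3 →₀ ℕ) :
    coeff d (aeval ![C ζ * X 0, C ζ⁻¹ * X 1, X 2] f)
      = ζ ^ (d 0) * ζ⁻¹ ^ (d 1) * coeff d f := by
  induction f using MvPolynomial.induction_on' with
  | monomial u r =>
    rw [phi_monomial, coeff_C_mul, coeff_monomial]
    split_ifs with h
    · subst h; rfl
    · ring
  | add p q hp hq => rw [map_add, coeff_add, hp, hq, coeff_add]; ring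

private lemma xy_mem (n : ℕ) (i j : ℕ) (h : i ≡ j [MOD n]) :
    X 0 ^ i * X 1 ^ j ∈ Algebra.adjoin ℂ
      ({X 0 ^ n, X 1 ^ n, X 0 * X 1, X 2} : Set (MvPolynomial (Fin 3) ℂ)) := by
  rcases le_total i j with hle | hle
  · obtain ⟨m, hm⟩ := (Nat.modEq_iff_dvd' hle).mp h
    have hj : j = i + n * m := by omega
    subst hj
    have : (X 0 : MvPolynomial (Fin 3) ℂ) ^ i * X 1 ^ (i + n * m)
        = (X 0 * X 1) ^ i * (X 1 ^ n) ^ m := by ring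
    rw [this]
    exact mul_mem (pow_mem (Algebra.subset_adjoin (by simp)) _)
      (pow_mem (Algebra.subset_adjoin (by simp)) _)
  · obtain ⟨m, hm⟩ := (Nat.modEq_iff_dvd' hle).mp h.symm
    have hi : i = j + n * m := by omega
    subst hi
    have : (X 0 : MvPolynomial (Fin 3) ℂ) ^ (j + n * m) * X 1 ^ j
        = (X 0 * X 1) ^ j * (X 0 ^ n) ^ m := by ring
    rw [this]
    exact mul_mem (pow_mem (Algebra.subset_adjoin (by simp)) _)
      (pow_mem (Algebra.subset_adjoin (by simp)) _)

/-- Let the cyclic group of order `n` act on `ℂ[a,b,c]` with generator `a ↦ ζa`,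
`b ↦ ζ⁻¹b`, `c ↦ c`, `ζ` a primitive `n`-th root of unity.  The subalgebra of invariant
polynomials equals the ℂ-subalgebra generated by `aⁿ`, `bⁿ`, `ab` and `c`. -/
theorem stmt15 (n : ℕ) (hn : 2 ≤ n) (ζ : ℂ) (hζ : IsPrimitiveRoot ζ n)
    (f : MvPolynomial (Fin 3) ℂ) :
    aeval ![C ζ * X 0, C ζ⁻¹ * X 1, X 2] f = f ↔
      f ∈ Algebra.adjoin ℂ
        ({X 0 ^ n, X 1 ^ n, X 0 * X 1, X 2} : Set (MvPolynomial (Fin 3) ℂ)) := by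
  have hz : ζ ≠ 0 := hζ.ne_zero (by omega)
  constructor
  · intro h
    have key : ∀ d ∈ f.support, (d : Fin 3 →₀ ℕ) 0 ≡ d 1 [MOD n] := by
      intro d hd
      have hc : coeff d f ≠ 0 := mem_support_iff.mp hd
      have h1 : ζ ^ (d 0) * ζ⁻¹ ^ (d 1) * coeff d f = coeff d f := by
        rw [← coeff_phi, h]
      have h2 : ζ ^ (d 0) * ζ⁻¹ ^ (d 1) = 1 :=
        mul_right_cancel₀ hc (by rw [h1, one_mul])
      have h3 : ζ ^ (d 0) = ζ ^ (d 1) :=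
        (mul_inv_eq_one₀ (pow_ne_zero _ hz)).mp (by rw [← inv_pow]; exact h2)
      rcases le_total (d 0) (d 1) with hle | hle
      · have h4 : ζ ^ (d 1 - d 0) = 1 := by
          rw [pow_sub₀ _ hz hle, ← h3]; exact mul_inv_cancel₀ (pow_ne_zero _ hz)
        exact (Nat.modEq_iff_dvd' hle).mpr ((hζ.pow_eq_one_iff_dvd _).mp h4)
      · have h4 : ζ ^ (d 0 - d 1) = 1 := by
          rw [pow_sub₀ _ hz hle, h3]; exact mul_inv_cancel₀ (pow_ne_zero _ hz)
        exact ((Nat.modEq_iff_dvd' hle).mpr ((hζ.pow_eq_one_iff_dvd _).mp h4)).symm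
    rw [f.as_sum]
    refine Subalgebra.sum_mem _ fun d hd => ?_
    rw [monomial_eq, Finsupp.prod_fintype _ _ (fun i => pow_zero _), Fin.prod_univ_three]
    have hxy := xy_mem n (d 0) (d 1) (key d hd)
    have hx2 : (X 2 : MvPolynomial (Fin 3) ℂ) ^ (d 2) ∈ Algebra.adjoin ℂ
        ({X 0 ^ n, X 1 ^ n, X 0 * X 1, X 2} : Set (MvPolynomial (Fin 3) ℂ)) :=
      pow_mem (Algebra.subset_adjoin (by simp)) _
    refine mul_mem ?_ (mul_mem hxy hx2)
    exact Subalgebra.algebraMap_mem _ _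
  · intro h
    induction h using Algebra.adjoin_induction with
    | mem x hx =>
      rcases hx with rfl | rfl | rfl | rfl
      · rw [map_pow, aeval_X]
        simp only [Matrix.cons_val_zero]
        rw [mul_pow, ← C_pow, hζ.pow_eq_one, C_1, one_mul]
      · rw [map_pow, aeval_X]
        simp only [Matrix.cons_val_one, Matrix.head_cons, Matrix.cons_val_zero]
        rw [mul_pow, ← C_pow, inv_pow, hζ.pow_eq_one, inv_one, C_1, one_mul]
      · rw [map_mul, aeval_X, aeval_X]
        simp only [Matrix.cons_val_zero, Matrix.cons_val_one, Matrix.head_cons]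
        rw [mul_mul_mul_comm, ← C_mul, mul_inv_cancel₀ hz, C_1, one_mul]
      · rw [aeval_X]
        simp [Matrix.cons_val_two]
    | algebraMap r => simp [algebraMap_eq]
    | add p q _ _ hp hq => rw [map_add, hp, hq]
    | mul p q _ _ hp hq => rw [map_mul, hp, hq]
end
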